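/- Let γ : ℝ^{d−1} → ℝ be Lipschitz with constant L on B_ρ^{d−1}(x₀'), let x₀ ∈ ℝ^d with x₀_d = γ(x₀'), and define Ω ∩ B_ρ(x₀) = {y ∈ B_ρ(x₀) : y_d > γ(y')}. Then for every ε ≤ ρ/(2(L+2)), one has (Ω ∩ B_{ρ/2}(x₀)) + B_ε(ε(L+1)e_d) ⊆ Ω ∩ B_ρ(x₀). -/

import Mathlib

open Metric Set

/-- Projection onto the first `d` coordinates. -/
noncomputable def projFst (d : ℕ) (y : EuclideanSpace ℝ (Fin (d + 1))) :
    EuclideanSpace ℝ (Fin d) := WithLp.toLp 2 (fun i : Fin d => y i.castSucc)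

lemma projFst_norm_le (d : ℕ) (w : EuclideanSpace ℝ (Fin (d + 1))) :
    ‖projFst d w‖ ≤ ‖w‖ := by
  rw [EuclideanSpace.norm_eq, EuclideanSpace.norm_eq]
  apply Real.sqrt_le_sqrt
  rw [Fin.sum_univ_castSucc (f := fun i => ‖w i‖ ^ 2)]
  have : (0:ℝ) ≤ ‖w (Fin.last d)‖ ^ 2 := sq_nonneg _
  simp only [projFst, PiLp.toLp_apply]
  linarith

lemma abs_last_le_norm (d : ℕ) (w : EuclideanSpace ℝ (Fin (d + 1))) :
    |w (Fin.last d)| ≤ ‖w‖ := by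
  rw [EuclideanSpace.norm_eq]
  have h : |w (Fin.last d)| = Real.sqrt (‖w (Fin.last d)‖ ^ 2) := by
    rw [Real.sqrt_sq_eq_abs]; simp
  rw [h]
  apply Real.sqrt_le_sqrt
  exact Finset.single_le_sum (f := fun i => ‖w i‖ ^ 2)
    (fun i _ => sq_nonneg _) (Finset.mem_univ _)

lemma projFst_sub (d : ℕ) (a b : EuclideanSpace ℝ (Fin (d + 1))) :
    projFst d (a - b) = projFst d a - projFst d b := rfl

lemma projFst_add (d : ℕ) (a b : EuclideanSpace ℝ (Fin (d + 1))) :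
    projFst d (a + b) = projFst d a + projFst d b := rfl

/-- with `Ω ∩ B_ρ(x₀) = {y ∈ B_ρ(x₀) : y_d > γ(y')}` for a function `γ`
that is `L`-Lipschitz on `B_ρ^{d-1}(x₀')`, for every `ε ≤ ρ/(2(L+2))` it holds that
`(Ω ∩ B_{ρ/2}(x₀)) + B_ε(ε(L+1)e_d) ⊆ Ω ∩ B_ρ(x₀)`. -/
theorem stmt6 (d : ℕ) (x₀ : EuclideanSpace ℝ (Fin (d + 1)))
    (γ : EuclideanSpace ℝ (Fin d) → ℝ) (L ρ : ℝ) (hL : 0 ≤ L) (hρ : 0 < ρ)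
    (hγ : ∀ z w : EuclideanSpace ℝ (Fin d),
      ‖z - projFst d x₀‖ < ρ → ‖w - projFst d x₀‖ < ρ → |γ z - γ w| ≤ L * ‖z - w‖)
    (hx₀ : x₀ (Fin.last d) = γ (projFst d x₀)) :
    ∀ ε : ℝ, 0 < ε → ε ≤ ρ / (2 * (L + 2)) →
      ∀ y z : EuclideanSpace ℝ (Fin (d + 1)),
        ‖y - x₀‖ < ρ / 2 → γ (projFst d y) < y (Fin.last d) →
        ‖z - (ε * (L + 1)) • (EuclideanSpace.single (Fin.last d) (1:ℝ))‖ < ε →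
        ‖y + z - x₀‖ < ρ ∧ γ (projFst d (y + z)) < (y + z) (Fin.last d) := by
  intro ε hε hερ y z hy hyγ hz
  set c : ℝ := ε * (L + 1) with hc
  set v : EuclideanSpace ℝ (Fin (d + 1)) :=
    (ε * (L + 1)) • (EuclideanSpace.single (Fin.last d) (1:ℝ)) with hv
  have hL2 : (0:ℝ) < L + 2 := by linarith
  have hεL2 : ε * (L + 2) ≤ ρ / 2 := by
    rw [← div_div] at hερ
    exact (le_div_iff₀ hL2).mp hερ
  -- norm of v
  have hvnorm : ‖v‖ = c := by
    rw [hv, norm_smul, EuclideanSpace.norm_single, norm_one, mul_one,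
      Real.norm_eq_abs, abs_of_nonneg (by nlinarith)]
  have hznorm : ‖z‖ < ε + c := by
    calc ‖z‖ = ‖z - v + v‖ := by congr 1; abel
      _ ≤ ‖z - v‖ + ‖v‖ := norm_add_le _ _
      _ < ε + c := by rw [hvnorm]; linarith
  have hεc : ε + c ≤ ρ / 2 := by
    have : ε + c = ε * (L + 2) := by rw [hc]; ring
    linarith [this ▸ hεL2]
  -- first goal
  have hfirst : ‖y + z - x₀‖ < ρ := by
    have : ‖y + z - x₀‖ ≤ ‖y - x₀‖ + ‖z‖ := by
      calc ‖y + z - x₀‖ = ‖(y - x₀) + z‖ := by congr 1; abel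
        _ ≤ ‖y - x₀‖ + ‖z‖ := norm_add_le _ _
    linarith
  refine ⟨hfirst, ?_⟩
  -- projFst v = 0
  have hprojv : projFst d v = 0 := by
    ext i
    simp only [projFst, hv, PiLp.smul_apply, EuclideanSpace.single_apply]
    have : (i.castSucc : Fin (d + 1)) ≠ Fin.last d := Fin.castSucc_lt_last i |>.ne
    simp [this]
  have hprojz : projFst d z = projFst d (z - v) := by
    rw [projFst_sub, hprojv, sub_zero]
  have hprojz_norm : ‖projFst d z‖ < ε := by
    rw [hprojz]
    exact lt_of_le_of_lt (projFst_norm_le d _) hz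
  -- last coordinate of z
  have hvlast : v (Fin.last d) = c := by
    simp [hv, hc]
  have hzlast : ε * L < z (Fin.last d) := by
    have h1 : |(z - v) (Fin.last d)| ≤ ‖z - v‖ := abs_last_le_norm d _
    have h2 : (z - v) (Fin.last d) = z (Fin.last d) - c := by
      simp [PiLp.sub_apply, hvlast]
    rw [h2] at h1
    have := abs_lt.mp (lt_of_le_of_lt h1 hz)
    rw [hc] at *
    linarith [this.1]
  -- apply Lipschitz
  have hy' : ‖projFst d y - projFst d x₀‖ < ρ := by
    rw [← projFst_sub]
    exact lt_of_le_of_lt (projFst_norm_le d _) (by linarith : ‖y - x₀‖ < ρ)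
  have hyz' : ‖projFst d (y + z) - projFst d x₀‖ < ρ := by
    rw [← projFst_sub]
    exact lt_of_le_of_lt (projFst_norm_le d _) hfirst
  have hlip := hγ (projFst d (y + z)) (projFst d y) hyz' hy'
  have hdiff : projFst d (y + z) - projFst d y = projFst d z := by
    rw [projFst_add]; abel
  rw [hdiff] at hlip
  have hlipbound : γ (projFst d (y + z)) - γ (projFst d y) ≤ L * ε := by
    have h1 := (abs_le.mp hlip).2
    have h2 : L * ‖projFst d z‖ ≤ L * ε :=
      mul_le_mul_of_nonneg_left (le_of_lt hprojz_norm) hL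
    linarith
  have hlastadd : (y + z) (Fin.last d) = y (Fin.last d) + z (Fin.last d) := rfl
  rw [hlastadd]
  nlinarith
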